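/- Let a₁, b₁ > 0 with a₁ < 1. Suppose a sequence (v_t) is defined by v_0 = a₁ and v_t = a₁ + b₁ ∑_{s=0}^{t-1} v_s(1-v_s), and suppose v_t ≤ 1/2 for all t ≤ T. Then for every 0 ≤ t ≤ T, v_t ≥ (a₁/(1-a₁))·e^{(b₁/(1+b₁))·t} / (1 + (a₁/(1-a₁))·e^{(b₁/(1+b₁))·t}). -/

import Mathlib

open Finset

/-- Discrete logistic-type comparison inequality, lower bound, for the sequence
`v t = a₁ + b₁ * ∑_{s<t} v s (1 - v s)` (so `v 0 = a₁`), assuming `v t ≤ 1/2` up to time `T`. -/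
theorem discrete_logistic_lower (a₁ b₁ : ℝ) (ha0 : 0 < a₁) (ha1 : a₁ < 1) (hb : 0 < b₁)
    (v : ℕ → ℝ)
    (hv : ∀ t : ℕ, v t = a₁ + b₁ * ∑ s ∈ Finset.range t, v s * (1 - v s))
    (T : ℕ) (hT : ∀ t ≤ T, v t ≤ 1 / 2) :
    ∀ t ≤ T,
      (a₁ / (1 - a₁)) * Real.exp ((b₁ / (1 + b₁)) * t) /
        (1 + (a₁ / (1 - a₁)) * Real.exp ((b₁ / (1 + b₁)) * t)) ≤ v t := by
  have h1a : 0 < 1 - a₁ := by linarith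
  have hb1 : (0:ℝ) < 1 + b₁ := by linarith
  set c := a₁ / (1 - a₁) with hc
  set r := b₁ / (1 + b₁) with hr
  have hcpos : 0 < c := div_pos ha0 h1a
  have hrpos : 0 < r := div_pos hb hb1
  have hE1 : 1 ≤ Real.exp r := Real.one_le_exp hrpos.le
  have hE2 : Real.exp r ≤ 1 + b₁ := by
    have h2 := Real.add_one_le_exp (-r)
    have h3 : (1:ℝ) - r = 1 / (1 + b₁) := by
      rw [hr]; field_simp; ring
    have h1 : 1 / (1 + b₁) ≤ Real.exp (-r) := by linarith
    have hm : Real.exp r * Real.exp (-r) = 1 := by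
      rw [← Real.exp_add]; simp
    have h5 := mul_le_mul_of_nonneg_left h1 (Real.exp_pos r).le
    rw [hm, mul_one_div, div_le_one hb1] at h5
    exact h5
  have hstep : ∀ t, v (t+1) = v t + b₁ * (v t * (1 - v t)) := by
    intro t
    have h1 := hv (t+1)
    have h2 := hv t
    rw [Finset.sum_range_succ] at h1
    linear_combination h1 - h2
  intro t
  induction t with
  | zero =>
    intro _
    have hv0 : v 0 = a₁ := by rw [hv 0]; simp
    have heq : c * Real.exp (r * ((0:ℕ):ℝ)) / (1 + c * Real.exp (r * ((0:ℕ):ℝ))) = a₁ := by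
      simp only [Nat.cast_zero, mul_zero, Real.exp_zero, mul_one]
      rw [hc]; field_simp; ring
    rw [hv0, heq]
  | succ n ih =>
    intro hn1
    have hn : n ≤ T := Nat.le_of_succ_le hn1
    have ihn := ih hn
    set w := c * Real.exp (r * (n:ℝ)) with hw
    have hwpos : 0 < w := by positivity
    have hden : (0:ℝ) < 1 + w := by linarith
    have hxpos : 0 < w / (1 + w) := div_pos hwpos hden
    have hxy : w / (1 + w) ≤ v n := ihn
    have hy2 : v n ≤ 1/2 := hT n hn
    have hypos : 0 < v n := lt_of_lt_of_le hxpos hxy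
    set E := Real.exp r with hEdef
    have hEpos : 0 < E := Real.exp_pos r
    have hgsucc : c * Real.exp (r * ((n+1:ℕ):ℝ)) = w * E := by
      push_cast
      rw [mul_add, mul_one, Real.exp_add, hw]; ring
    rw [hstep n, hgsucc]
    have hdenE : (0:ℝ) < 1 + w * E := by positivity
    have ht1 : 0 ≤ 1 + b₁ - E := by linarith
    have ht2 : 0 ≤ 1 + b₁ * E - E := by nlinarith
    have stepB : w * E / (1 + w * E) ≤ w * (1 + w + b₁) / ((1 + w)^2) := by
      rw [div_le_div_iff₀ hdenE (by positivity)]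
      nlinarith [mul_nonneg hwpos.le ht1, mul_nonneg (mul_nonneg hwpos.le hwpos.le) ht2]
    have hxeq : w * (1 + w + b₁) / ((1 + w)^2)
        = w/(1+w) + b₁ * (w/(1+w) * (1 - w/(1+w))) := by
      field_simp; ring
    have stepA : w/(1+w) + b₁ * (w/(1+w) * (1 - w/(1+w)))
        ≤ v n + b₁ * (v n * (1 - v n)) := by
      set x := w/(1+w) with hxdef
      have hx2 : x ≤ 1/2 := le_trans hxy hy2
      nlinarith [mul_nonneg (sub_nonneg.2 hxy)
        (by nlinarith : (0:ℝ) ≤ 1 + b₁ * (1 - x - v n))]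
    linarith [hxeq ▸ stepB]
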